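/- The completion of the metric space (H̃^d, d̂) is the set Ĥ^d := (ℕ^d × ℕ^d × (ℝ\{0})) ∪ Ĥ₀^d, where Ĥ₀^d := ℝ_∓^d × ℤ^d and ℝ_∓^d := (ℝ₋)^d ∪ (ℝ₊)^d, equipped with the extended distance d̂. More precisely: the extended d̂ is a distance on Ĥ^d, (Ĥ^d, d̂) is a complete metric space, H̃^d is isometrically embedded and dense in Ĥ^d. -/

import Mathlib

open MeasureTheory Complex

noncomputable section

/-- The distance `d̂` on `H̃^d = ℕ^d × ℕ^d × (ℝ \ {0})`. -/
def dtilde {d : ℕ} (n m : Fin d → ℕ) (lam : ℝ) (n' m' : Fin d → ℕ) (lam' : ℝ) : ℝ :=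
  (∑ j, |lam * ((n j : ℝ) + (m j : ℝ)) - lam' * ((n' j : ℝ) + (m' j : ℝ))|)
    + (∑ j, |((n j : ℝ) - (m j : ℝ)) - ((n' j : ℝ) - (m' j : ℝ))|)
    + |lam - lam'|

/-- The distance between a point of `H̃^d` and a point `(ẋ, k)` of `Ĥ₀^d`. -/
def dmix {d : ℕ} (n m : Fin d → ℕ) (lam : ℝ) (x : Fin d → ℝ) (k : Fin d → ℤ) : ℝ :=
  (∑ j, |lam * ((n j : ℝ) + (m j : ℝ)) - x j|)
    + (∑ j, |((m j : ℝ) - (n j : ℝ)) - (k j : ℝ)|)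
    + |lam|

/-- The distance between two points of `Ĥ₀^d`. -/
def dzero {d : ℕ} (x : Fin d → ℝ) (k : Fin d → ℤ) (x' : Fin d → ℝ) (k' : Fin d → ℤ) : ℝ :=
  (∑ j, |x j - x' j|) + (∑ j, |(k j : ℝ) - (k' j : ℝ)|)

/-- Raw points: either a point of `ℕ^d × ℕ^d × ℝ` or a point of `ℝ^d × ℤ^d`. -/
def HeisPoint (d : ℕ) : Type :=
  (((Fin d → ℕ) × (Fin d → ℕ)) × ℝ) ⊕ ((Fin d → ℝ) × (Fin d → ℤ))

/-- The predicate carving out `Ĥ^d`: `λ ≠ 0` on the first summand; all components of `ẋ`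
of the same sign (`ẋ ∈ (ℝ₋)^d ∪ (ℝ₊)^d`) on the second. -/
def HhatPred {d : ℕ} : HeisPoint d → Prop
  | Sum.inl a => a.2 ≠ 0
  | Sum.inr b => (∀ j, b.1 j ≤ 0) ∨ (∀ j, 0 ≤ b.1 j)

/-- The completed frequency space `Ĥ^d`. -/
def Hhat (d : ℕ) : Type := {a : HeisPoint d // HhatPred a}

/-- The extended distance `d̂` on `Ĥ^d`. -/
def dhat {d : ℕ} (a b : Hhat d) : ℝ :=
  match a.1, b.1 with
  | Sum.inl x, Sum.inl y => dtilde x.1.1 x.1.2 x.2 y.1.1 y.1.2 y.2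
  | Sum.inl x, Sum.inr y => dmix x.1.1 x.1.2 x.2 y.1 y.2
  | Sum.inr x, Sum.inl y => dmix y.1.1 y.1.2 y.2 x.1 x.2
  | Sum.inr x, Sum.inr y => dzero x.1 x.2 y.1 y.2

/-- The canonical embedding of `H̃^d` into `Ĥ^d`. -/
def iotaT {d : ℕ} (n m : Fin d → ℕ) (lam : ℝ) (h : lam ≠ 0) : Hhat d :=
  ⟨Sum.inl ((n, m), lam), h⟩

namespace Stmt7Aux
variable {d : ℕ}

abbrev Tgt (d : ℕ) := (Fin d → ℝ) × (Fin d → ℝ) × ℝ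

def Phi0 : HeisPoint d → Tgt d
  | Sum.inl x => (fun j => x.2 * ((x.1.1 j : ℝ) + (x.1.2 j : ℝ)),
      fun j => (x.1.1 j : ℝ) - (x.1.2 j : ℝ), x.2)
  | Sum.inr y => (y.1, fun j => -((y.2 j : ℝ)), 0)

@[simp] lemma Phi0_inl (x : ((Fin d → ℕ) × (Fin d → ℕ)) × ℝ) :
    Phi0 (d := d) (Sum.inl x) = (fun j => x.2 * ((x.1.1 j : ℝ) + (x.1.2 j : ℝ)),
      fun j => (x.1.1 j : ℝ) - (x.1.2 j : ℝ), x.2) := rfl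

@[simp] lemma Phi0_inr (y : (Fin d → ℝ) × (Fin d → ℤ)) :
    Phi0 (d := d) (Sum.inr y) = (y.1, fun j => -((y.2 j : ℝ)), 0) := rfl

def Phi (a : Hhat d) : Tgt d := Phi0 a.1

def Dl1 (u v : Tgt d) : ℝ :=
  (∑ j, |u.1 j - v.1 j|) + (∑ j, |u.2.1 j - v.2.1 j|) + |u.2.2 - v.2.2|

lemma dhat_eq (a b : Hhat d) : dhat a b = Dl1 (Phi a) (Phi b) := by
  obtain ⟨w, hw⟩ := a
  obtain ⟨w', hw'⟩ := b
  cases w <;> cases w' <;>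
    simp only [dhat, Phi, Phi0_inl, Phi0_inr, Dl1, dtilde, dmix, dzero, sub_zero, zero_sub,
      abs_neg, abs_zero, add_zero, neg_sub_neg]
  · congr 1
    congr 1
    apply Finset.sum_congr rfl
    intro j _
    rw [abs_sub_comm]; congr 1; ring
  · congr 1
    congr 1
    · apply Finset.sum_congr rfl
      intro j _
      exact abs_sub_comm _ _
    · apply Finset.sum_congr rfl
      intro j _
      congr 1; ring
  · congr 1
    apply Finset.sum_congr rfl
    intro j _
    exact abs_sub_comm _ _

lemma Dl1_nonneg (u v : Tgt d) : 0 ≤ Dl1 u v := by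
  unfold Dl1
  have h1 : (0:ℝ) ≤ ∑ j, |u.1 j - v.1 j| := Finset.sum_nonneg fun j _ => abs_nonneg _
  have h2 : (0:ℝ) ≤ ∑ j, |u.2.1 j - v.2.1 j| := Finset.sum_nonneg fun j _ => abs_nonneg _
  have h3 := abs_nonneg (u.2.2 - v.2.2)
  linarith

lemma Dl1_self (u : Tgt d) : Dl1 u u = 0 := by simp [Dl1]

lemma Dl1_comm (u v : Tgt d) : Dl1 u v = Dl1 v u := by
  unfold Dl1
  rw [abs_sub_comm]
  congr 1
  congr 1 <;> exact Finset.sum_congr rfl fun j _ => abs_sub_comm _ _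

lemma Dl1_triangle (u v w : Tgt d) : Dl1 u w ≤ Dl1 u v + Dl1 v w := by
  unfold Dl1
  have h1 : ∑ j, |u.1 j - w.1 j| ≤ (∑ j, |u.1 j - v.1 j|) + ∑ j, |v.1 j - w.1 j| := by
    rw [← Finset.sum_add_distrib]
    exact Finset.sum_le_sum fun j _ => abs_sub_le _ _ _
  have h2 : ∑ j, |u.2.1 j - w.2.1 j| ≤ (∑ j, |u.2.1 j - v.2.1 j|) + ∑ j, |v.2.1 j - w.2.1 j| := by
    rw [← Finset.sum_add_distrib]
    exact Finset.sum_le_sum fun j _ => abs_sub_le _ _ _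
  have h3 := abs_sub_le u.2.2 v.2.2 w.2.2
  linarith

lemma Dl1_eq_zero {u v : Tgt d} (h : Dl1 u v = 0) : u = v := by
  unfold Dl1 at h
  have h1 : (0:ℝ) ≤ ∑ j, |u.1 j - v.1 j| := Finset.sum_nonneg fun j _ => abs_nonneg _
  have h2 : (0:ℝ) ≤ ∑ j, |u.2.1 j - v.2.1 j| := Finset.sum_nonneg fun j _ => abs_nonneg _
  have h3 := abs_nonneg (u.2.2 - v.2.2)
  have e1 : ∑ j, |u.1 j - v.1 j| = 0 := by linarith
  have e2 : ∑ j, |u.2.1 j - v.2.1 j| = 0 := by linarith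
  have e3 : |u.2.2 - v.2.2| = 0 := by linarith
  rw [Finset.sum_eq_zero_iff_of_nonneg fun j _ => abs_nonneg _] at e1 e2
  have g1 : u.1 = v.1 := by
    funext j
    have := e1 j (Finset.mem_univ j)
    rw [abs_eq_zero, sub_eq_zero] at this; exact this
  have g2 : u.2.1 = v.2.1 := by
    funext j
    have := e2 j (Finset.mem_univ j)
    rw [abs_eq_zero, sub_eq_zero] at this; exact this
  have g3 : u.2.2 = v.2.2 := by rwa [abs_eq_zero, sub_eq_zero] at e3
  exact Prod.ext g1 (Prod.ext g2 g3)

lemma Phi_inj : Function.Injective (Phi (d := d)) := by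
  rintro ⟨w, hw⟩ ⟨w', hw'⟩ h
  apply Subtype.ext
  simp only
  cases w with
  | inl x =>
    cases w' with
    | inl y =>
      simp only [Phi, Phi0_inl] at h
      have h1 := congrArg (fun t : Tgt d => t.1) h
      have h2 := congrArg (fun t : Tgt d => t.2.1) h
      have h3 := congrArg (fun t : Tgt d => t.2.2) h
      simp only at h1 h2 h3
      have hx2 : x.2 ≠ 0 := hw
      have hxy : ∀ j, (x.1.1 j : ℝ) = y.1.1 j ∧ (x.1.2 j : ℝ) = y.1.2 j := by
        intro j
        have e1 : x.2 * ((x.1.1 j : ℝ) + x.1.2 j) = x.2 * ((y.1.1 j : ℝ) + y.1.2 j) := by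
          have := congrFun h1 j
          rw [← h3] at this
          exact this
        have e1' : (x.1.1 j : ℝ) + x.1.2 j = (y.1.1 j : ℝ) + y.1.2 j :=
          mul_left_cancel₀ hx2 e1
        have e2 : (x.1.1 j : ℝ) - x.1.2 j = (y.1.1 j : ℝ) - y.1.2 j := congrFun h2 j
        constructor <;> linarith
      have ha : x.1.1 = y.1.1 := funext fun j => by exact_mod_cast (hxy j).1
      have hb : x.1.2 = y.1.2 := funext fun j => by exact_mod_cast (hxy j).2
      have : x = y := Prod.ext (Prod.ext ha hb) h3
      rw [this]
    | inr y =>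
      exfalso
      have h3 : x.2 = (0:ℝ) := congrArg (fun t : Tgt d => t.2.2) h
      exact hw h3
  | inr x =>
    cases w' with
    | inl y =>
      exfalso
      have h3 : (0:ℝ) = y.2 := congrArg (fun t : Tgt d => t.2.2) h
      exact hw' h3.symm
    | inr y =>
      simp only [Phi, Phi0_inr] at h
      have h1 : x.1 = y.1 := congrArg (fun t : Tgt d => t.1) h
      have h2 : (fun j => -((x.2 j : ℝ))) = fun j => -((y.2 j : ℝ)) :=
        congrArg (fun t : Tgt d => t.2.1) h
      have hk : x.2 = y.2 := by
        funext j
        have : ((x.2 j : ℝ)) = y.2 j := by linarith [congrFun h2 j]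
        exact_mod_cast this
      have : x = y := Prod.ext h1 hk
      rw [this]


lemma dist_le_Dl1 (u v : Tgt d) : dist u v ≤ Dl1 u v := by
  rw [Prod.dist_eq]
  apply max_le
  · rw [dist_pi_le_iff (Dl1_nonneg u v)]
    intro j
    rw [Real.dist_eq]
    unfold Dl1
    have h1 := Finset.single_le_sum (f := fun j => |u.1 j - v.1 j|)
      (fun i _ => abs_nonneg _) (Finset.mem_univ j)
    have h2 : (0:ℝ) ≤ ∑ j, |u.2.1 j - v.2.1 j| := Finset.sum_nonneg fun j _ => abs_nonneg _
    have h3 := abs_nonneg (u.2.2 - v.2.2)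
    linarith
  · rw [Prod.dist_eq]
    apply max_le
    · rw [dist_pi_le_iff (Dl1_nonneg u v)]
      intro j
      rw [Real.dist_eq]
      unfold Dl1
      have h1 := Finset.single_le_sum (f := fun j => |u.2.1 j - v.2.1 j|)
        (fun i _ => abs_nonneg _) (Finset.mem_univ j)
      have h2 : (0:ℝ) ≤ ∑ j, |u.1 j - v.1 j| := Finset.sum_nonneg fun j _ => abs_nonneg _
      have h3 := abs_nonneg (u.2.2 - v.2.2)
      linarith
    · rw [Real.dist_eq]
      unfold Dl1
      have h1 : (0:ℝ) ≤ ∑ j, |u.1 j - v.1 j| := Finset.sum_nonneg fun j _ => abs_nonneg _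
      have h2 : (0:ℝ) ≤ ∑ j, |u.2.1 j - v.2.1 j| := Finset.sum_nonneg fun j _ => abs_nonneg _
      linarith

lemma Dl1_le_dist (u v : Tgt d) : Dl1 u v ≤ (2 * d + 1) * dist u v := by
  unfold Dl1
  have hd : ∀ j, |u.1 j - v.1 j| ≤ dist u v := by
    intro j
    rw [← Real.dist_eq]
    calc dist (u.1 j) (v.1 j) ≤ dist u.1 v.1 := dist_le_pi_dist _ _ j
      _ ≤ dist u v := by rw [Prod.dist_eq]; exact le_max_left _ _
  have hd2 : ∀ j, |u.2.1 j - v.2.1 j| ≤ dist u v := by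
    intro j
    rw [← Real.dist_eq]
    calc dist (u.2.1 j) (v.2.1 j) ≤ dist u.2.1 v.2.1 := dist_le_pi_dist _ _ j
      _ ≤ dist u.2 v.2 := by rw [Prod.dist_eq]; exact le_max_left _ _
      _ ≤ dist u v := by rw [Prod.dist_eq]; exact le_max_right _ _
  have hd3 : |u.2.2 - v.2.2| ≤ dist u v := by
    rw [← Real.dist_eq]
    calc dist u.2.2 v.2.2 ≤ dist u.2 v.2 := by rw [Prod.dist_eq]; exact le_max_right _ _
      _ ≤ dist u v := by rw [Prod.dist_eq]; exact le_max_right _ _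
  have s1 : ∑ j, |u.1 j - v.1 j| ≤ (d:ℝ) * dist u v := by
    calc ∑ j, |u.1 j - v.1 j| ≤ ∑ _j : Fin d, dist u v :=
          Finset.sum_le_sum fun j _ => hd j
      _ = (d:ℝ) * dist u v := by
          rw [Finset.sum_const, Finset.card_univ, Fintype.card_fin, nsmul_eq_mul]
  have s2 : ∑ j, |u.2.1 j - v.2.1 j| ≤ (d:ℝ) * dist u v := by
    calc ∑ j, |u.2.1 j - v.2.1 j| ≤ ∑ _j : Fin d, dist u v :=
          Finset.sum_le_sum fun j _ => hd2 j
      _ = (d:ℝ) * dist u v := by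
          rw [Finset.sum_const, Finset.card_univ, Fintype.card_fin, nsmul_eq_mul]
  have : (2 * (d:ℝ) + 1) * dist u v = (d:ℝ) * dist u v + (d:ℝ) * dist u v + dist u v := by ring
  push_cast
  linarith

open Filter in
lemma eventually_eq_limit (w : ℕ → ℝ) (L : ℝ) (hw : Tendsto w atTop (nhds L))
    (hint : ∀ᶠ p in atTop, ∃ z : ℤ, w p = z) :
    (∃ z : ℤ, L = z) ∧ ∀ᶠ p in atTop, w p = L := by
  obtain ⟨N1, hN1⟩ := Metric.tendsto_atTop.mp hw (1/2) (by norm_num)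
  obtain ⟨N2, hN2⟩ := eventually_atTop.mp hint
  set N := max N1 N2 with hN
  have key : ∀ p ≥ N, w p = w N := by
    intro p hp
    obtain ⟨z, hz⟩ := hN2 N (le_max_right _ _)
    obtain ⟨z', hz'⟩ := hN2 p (le_trans (le_max_right _ _) hp)
    have d1 := hN1 p (le_trans (le_max_left _ _) hp)
    have d2 := hN1 N (le_max_left _ _)
    rw [Real.dist_eq] at d1 d2
    rw [hz, hz']
    have habs : |(z' : ℝ) - z| < 1 := by
      calc |(z':ℝ) - z| ≤ |(z':ℝ) - L| + |L - (z:ℝ)| := abs_sub_le _ _ _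
        _ < 1 := by
            rw [hz'] at d1; rw [hz] at d2
            rw [abs_sub_comm L (z:ℝ)]
            linarith
    have hzz : |z' - z| < 1 := by exact_mod_cast (by push_cast; exact habs : ((|z' - z| : ℤ):ℝ) < 1)
    have : z' = z := by
      rw [abs_lt] at hzz
      omega
    rw [this]
  have hLN : L = w N := by
    refine tendsto_nhds_unique hw ?_
    refine Tendsto.congr' ?_ (tendsto_const_nhds : Tendsto (fun _ : ℕ => w N) atTop (nhds (w N)))
    filter_upwards [eventually_ge_atTop N] with p hp
    exact (key p hp).symm
  constructor
  · obtain ⟨z, hz⟩ := hN2 N (le_max_right _ _)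
    exact ⟨z, by rw [hLN, hz]⟩
  · filter_upwards [eventually_ge_atTop N] with p hp
    rw [key p hp, ← hLN]

lemma approx {y dl : ℝ} (hy : 0 ≤ y) (hdl : 0 < dl) (K : ℕ) :
    |dl * ((K:ℝ) + 2 * (⌈y / (2*dl)⌉₊:ℝ)) - y| ≤ dl * K + 2*dl := by
  set C := (⌈y / (2*dl)⌉₊ : ℝ) with hC
  have h2dl : (0:ℝ) < 2*dl := by linarith
  have h1 : y / (2*dl) ≤ C := Nat.le_ceil _
  have h2 : C < y/(2*dl) + 1 := Nat.ceil_lt_add_one (by positivity)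
  have hb1 : y ≤ 2*dl*C := by
    have := (div_le_iff₀ h2dl).mp h1
    linarith
  have hb2 : 2*dl*C ≤ y + 2*dl := by
    have := mul_lt_mul_of_pos_left h2 h2dl
    rw [mul_add, mul_div_cancel₀ y (ne_of_gt h2dl)] at this
    linarith
  have hK : (0:ℝ) ≤ dl * K := by positivity
  rw [abs_le]
  constructor <;> nlinarith


open Filter in
lemma complete_aux (u : ℕ → Hhat d)
    (hu : ∀ ε > (0:ℝ), ∃ N, ∀ p ≥ N, ∀ q ≥ N, dhat (u p) (u q) < ε) :
    ∃ a : Hhat d, ∀ ε > (0:ℝ), ∃ N, ∀ p ≥ N, dhat (u p) a < ε := by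
  set v : ℕ → Tgt d := fun p => Phi (u p) with hv
  have hcauchy : CauchySeq v := by
    rw [Metric.cauchySeq_iff]
    intro ε hε
    obtain ⟨N, hN⟩ := hu ε hε
    refine ⟨N, fun p hp q hq => ?_⟩
    calc dist (v p) (v q) ≤ Dl1 (v p) (v q) := dist_le_Dl1 _ _
      _ = dhat (u p) (u q) := (dhat_eq _ _).symm
      _ < ε := hN p hp q hq
  obtain ⟨L, hL⟩ := cauchySeq_tendsto_of_complete hcauchy
  have hL1 : Tendsto (fun p => (v p).1) atTop (nhds L.1) :=
    ((continuous_fst.tendsto L).comp hL : _)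
  have hL2 : Tendsto (fun p => (v p).2.1) atTop (nhds L.2.1) :=
    (((continuous_fst.comp continuous_snd).tendsto L).comp hL : _)
  have hL3 : Tendsto (fun p => (v p).2.2) atTop (nhds L.2.2) :=
    (((continuous_snd.comp continuous_snd).tendsto L).comp hL : _)
  have hint2 : ∀ (j : Fin d) (p : ℕ), ∃ z : ℤ, (v p).2.1 j = z := by
    intro j p
    rcases h : (u p).1 with x | y
    · refine ⟨(x.1.1 j : ℤ) - (x.1.2 j : ℤ), ?_⟩
      simp only [hv, Phi, h, Phi0_inl]
      push_cast; ring
    · exact ⟨-(y.2 j), by simp [hv, Phi, h]⟩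
  have hdiff : ∀ j : Fin d, (∃ z : ℤ, L.2.1 j = z) ∧
      ∀ᶠ p in atTop, (v p).2.1 j = L.2.1 j := by
    intro j
    exact eventually_eq_limit _ _ (((continuous_apply j).tendsto _).comp hL2)
      (Eventually.of_forall (hint2 j))
  suffices hPhiL : ∃ a : Hhat d, Phi a = L by
    obtain ⟨a, hPhi⟩ := hPhiL
    refine ⟨a, fun ε hε => ?_⟩
    have hC : (0:ℝ) < 2*(d:ℝ)+1 := by positivity
    obtain ⟨N, hN⟩ := Metric.tendsto_atTop.mp hL (ε / (2*(d:ℝ)+1)) (by positivity)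
    refine ⟨N, fun p hp => ?_⟩
    calc dhat (u p) a = Dl1 (v p) (Phi a) := dhat_eq _ _
      _ = Dl1 (v p) L := by rw [hPhi]
      _ ≤ (2*(d:ℝ)+1) * dist (v p) L := Dl1_le_dist _ _
      _ < (2*(d:ℝ)+1) * (ε/(2*(d:ℝ)+1)) := by
          exact mul_lt_mul_of_pos_left (hN p hp) hC
      _ = ε := by field_simp
  rcases eq_or_ne L.2.2 0 with hlam | hlam
  · -- limit on the boundary
    choose bz hbz using fun j => (hdiff j).1
    have hsign : ∀ p, (∀ j, (v p).1 j ≤ 0) ∨ (∀ j, 0 ≤ (v p).1 j) := by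
      intro p
      rcases h : (u p).1 with x | y
      · have he : ∀ j, (v p).1 j = x.2 * ((x.1.1 j:ℝ) + x.1.2 j) := by
          intro j; simp [hv, Phi, h]
        rcases le_total x.2 0 with hx | hx
        · left; intro j
          rw [he j]
          exact mul_nonpos_iff.mpr (Or.inr ⟨hx, by positivity⟩)
        · right; intro j
          rw [he j]
          exact mul_nonneg hx (by positivity)
      · have hp := (u p).2
        rw [h] at hp
        have he : (v p).1 = y.1 := by simp [hv, Phi, h]
        rw [he]
        exact hp
    have hclosed : IsClosed {c : Fin d → ℝ | (∀ j, c j ≤ 0) ∨ (∀ j, 0 ≤ c j)} := by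
      rw [Set.setOf_or]
      apply IsClosed.union
      · have he : {c : Fin d → ℝ | ∀ j, c j ≤ 0}
            = ⋂ j, (fun c : Fin d → ℝ => c j) ⁻¹' Set.Iic 0 := by
          ext c; simp [Set.mem_iInter]
        rw [he]
        exact isClosed_iInter fun j => IsClosed.preimage (continuous_apply j) isClosed_Iic
      · have he : {c : Fin d → ℝ | ∀ j, 0 ≤ c j}
            = ⋂ j, (fun c : Fin d → ℝ => c j) ⁻¹' Set.Ici 0 := by
          ext c; simp [Set.mem_iInter]
        rw [he]
        exact isClosed_iInter fun j => IsClosed.preimage (continuous_apply j) isClosed_Ici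
    have hmem : ((∀ j, L.1 j ≤ 0) ∨ (∀ j, 0 ≤ L.1 j)) :=
      hclosed.mem_of_tendsto hL1 (Eventually.of_forall hsign)
    refine ⟨⟨Sum.inr (L.1, fun j => -(bz j)), hmem⟩, ?_⟩
    simp only [Phi, Phi0_inr]
    refine Prod.ext rfl (Prod.ext ?_ hlam.symm)
    funext j
    simp only [Int.cast_neg, neg_neg]
    exact (hbz j).symm
  · -- interior limit
    have hev_ne : ∀ᶠ p in atTop, (v p).2.2 ≠ 0 := by
      obtain ⟨N, hN⟩ := Metric.tendsto_atTop.mp hL3 |L.2.2| (abs_pos.mpr hlam)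
      filter_upwards [eventually_ge_atTop N] with p hp h0
      have := hN p hp
      rw [Real.dist_eq, h0, zero_sub, abs_neg] at this
      exact lt_irrefl _ this
    have hev_inl : ∀ᶠ p in atTop, ∃ x, (u p).1 = Sum.inl x := by
      filter_upwards [hev_ne] with p hp
      rcases h : (u p).1 with x | y
      · exact ⟨x, rfl⟩
      · exact absurd (by simp [hv, Phi, h] : (v p).2.2 = 0) hp
    have hratio_t : ∀ j : Fin d, Tendsto (fun p => (v p).1 j / (v p).2.2) atTop
        (nhds (L.1 j / L.2.2)) := fun j =>
      Tendsto.div (((continuous_apply j).tendsto _).comp hL1) hL3 hlam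
    have hratio_int : ∀ j : Fin d, ∀ᶠ p in atTop, ∃ z : ℤ, (v p).1 j / (v p).2.2 = z := by
      intro j
      filter_upwards [hev_inl] with p hp
      obtain ⟨x, hx⟩ := hp
      have hx2 : x.2 ≠ 0 := by have := (u p).2; rw [hx] at this; exact this
      refine ⟨(x.1.1 j : ℤ) + x.1.2 j, ?_⟩
      have h1 : (v p).1 j = x.2 * ((x.1.1 j:ℝ) + x.1.2 j) := by simp [hv, Phi, hx]
      have h2 : (v p).2.2 = x.2 := by simp [hv, Phi, hx]
      rw [h1, h2, mul_div_cancel_left₀ _ hx2]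
      push_cast; ring
    have hratio := fun j => eventually_eq_limit _ _ (hratio_t j) (hratio_int j)
    have hall : ∀ᶠ p in atTop, (∀ j, (v p).2.1 j = L.2.1 j) ∧
        (∀ j, (v p).1 j / (v p).2.2 = L.1 j / L.2.2) ∧ (∃ x, (u p).1 = Sum.inl x) :=
      (eventually_all.mpr (fun j => (hdiff j).2)).and
        ((eventually_all.mpr (fun j => (hratio j).2)).and hev_inl)
    obtain ⟨P, hP⟩ := eventually_atTop.mp hall
    obtain ⟨hPdiff, hPratio, x, hx⟩ := hP P le_rfl
    have hx2 : x.2 ≠ 0 := by have := (u P).2; rw [hx] at this; exact this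
    refine ⟨⟨Sum.inl ((x.1.1, x.1.2), L.2.2), hlam⟩, ?_⟩
    simp only [Phi, Phi0_inl]
    refine Prod.ext ?_ (Prod.ext ?_ rfl)
    · funext j
      have h1 : (v P).1 j = x.2 * ((x.1.1 j:ℝ) + x.1.2 j) := by simp [hv, Phi, hx]
      have h2 : (v P).2.2 = x.2 := by simp [hv, Phi, hx]
      have hr := hPratio j
      rw [h1, h2, mul_div_cancel_left₀ _ hx2] at hr
      show L.2.2 * ((x.1.1 j:ℝ) + x.1.2 j) = L.1 j
      rw [hr, mul_comm, div_mul_cancel₀ _ hlam]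
    · funext j
      have h1 : (v P).2.1 j = (x.1.1 j:ℝ) - x.1.2 j := by simp [hv, Phi, hx]
      have := hPdiff j
      rw [h1] at this
      exact this


lemma density_core (y1 : Fin d → ℝ) (k : Fin d → ℤ) (δ : ℝ) (hδ : 0 < δ)
    (hy : ∀ j, 0 ≤ y1 j) :
    ∃ n m : Fin d → ℕ, (∀ j, ((m j:ℝ) - (n j:ℝ) - (k j:ℝ)) = 0) ∧
      (∀ j, |δ * ((n j:ℝ) + (m j:ℝ)) - y1 j| ≤ δ * (((k j).natAbs):ℝ) + 2*δ) := by
  refine ⟨fun j => (-(k j)).toNat + ⌈y1 j / (2*δ)⌉₊,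
         fun j => (k j).toNat + ⌈y1 j / (2*δ)⌉₊, ?_, ?_⟩
  · intro j
    have hz : (((k j).toNat : ℤ)) - (((-(k j)).toNat : ℤ)) = k j := by omega
    have hz' : (((k j).toNat : ℝ)) - (((-(k j)).toNat : ℝ)) = (k j : ℝ) := by
      exact_mod_cast congrArg (Int.cast : ℤ → ℝ) hz
    push_cast
    push_cast at hz'
    linarith
  · intro j
    have hz : (((-(k j)).toNat : ℤ)) + (((k j).toNat : ℤ)) = ((k j).natAbs : ℤ) := by omega
    have hz' : (((-(k j)).toNat : ℝ)) + (((k j).toNat : ℝ)) = ((k j).natAbs : ℝ) := by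
      exact_mod_cast congrArg (Int.cast : ℤ → ℝ) hz
    have hrw : (((-(k j)).toNat + ⌈y1 j / (2*δ)⌉₊ : ℕ) : ℝ)
        + (((k j).toNat + ⌈y1 j / (2*δ)⌉₊ : ℕ) : ℝ)
        = ((k j).natAbs : ℝ) + 2 * ((⌈y1 j / (2*δ)⌉₊ : ℕ) : ℝ) := by
      push_cast
      push_cast at hz'
      linarith
    rw [hrw]
    exact approx (hy j) hδ _

lemma dense_aux (a : Hhat d) (ε : ℝ) (hε : 0 < ε) :
    ∃ (n m : Fin d → ℕ) (lam : ℝ) (h : lam ≠ 0), dhat a (iotaT n m lam h) < ε := by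
  obtain ⟨w, hw⟩ := a
  cases w with
  | inl x =>
    refine ⟨x.1.1, x.1.2, x.2, hw, ?_⟩
    have he : dhat ⟨Sum.inl x, hw⟩ (iotaT x.1.1 x.1.2 x.2 hw) = 0 := by
      refine (dhat_eq _ _).trans ?_
      exact Dl1_self _
    rw [he]; exact hε
  | inr y =>
    set K : ℕ := ∑ j, (y.2 j).natAbs with hK
    set δ : ℝ := ε / (2 * ((K:ℝ) + 2*(d:ℝ) + 1)) with hδ
    have hden : (0:ℝ) < 2 * ((K:ℝ) + 2*(d:ℝ) + 1) := by positivity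
    have hδpos : 0 < δ := by rw [hδ]; positivity
    have hδε : δ * ((K:ℝ) + 2*(d:ℝ) + 1) < ε := by
      have h2 : δ * (2 * ((K:ℝ) + 2*(d:ℝ) + 1)) = ε := by
        rw [hδ]; field_simp
      nlinarith
    have hKsum : ((K:ℝ)) = ∑ j, (((y.2 j).natAbs):ℝ) := by
      rw [hK]; push_cast; rfl
    rcases hw with hneg | hpos
    · -- all components nonpositive : use lam = -δ
      obtain ⟨n, m, hnm, hbd⟩ := density_core (fun j => -(y.1 j)) y.2 δ hδpos
        (fun j => neg_nonneg.mpr (hneg j))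
      refine ⟨n, m, -δ, neg_ne_zero.mpr (ne_of_gt hδpos), ?_⟩
      show dmix n m (-δ) y.1 y.2 < ε
      unfold dmix
      have hS2 : ∑ j, |((m j:ℝ) - (n j:ℝ)) - (y.2 j:ℝ)| = 0 :=
        Finset.sum_eq_zero fun j _ => by rw [sub_sub, ← sub_sub, hnm j, abs_zero]
      have hterm : ∀ j, |(-δ) * ((n j:ℝ) + (m j:ℝ)) - y.1 j|
          ≤ δ * (((y.2 j).natAbs):ℝ) + 2*δ := by
        intro j
        have heq : (-δ) * ((n j:ℝ) + (m j:ℝ)) - y.1 j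
            = -(δ * ((n j:ℝ) + (m j:ℝ)) - (-(y.1 j))) := by ring
        rw [heq, abs_neg]
        exact hbd j
      have hS1 : ∑ j, |(-δ) * ((n j:ℝ) + (m j:ℝ)) - y.1 j|
          ≤ δ * (K:ℝ) + 2*δ*(d:ℝ) := by
        calc ∑ j, |(-δ) * ((n j:ℝ) + (m j:ℝ)) - y.1 j|
            ≤ ∑ j, (δ * (((y.2 j).natAbs):ℝ) + 2*δ) :=
              Finset.sum_le_sum fun j _ => hterm j
          _ = δ * (K:ℝ) + 2*δ*(d:ℝ) := by
              rw [Finset.sum_add_distrib, ← Finset.mul_sum, ← hKsum, Finset.sum_const,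
                Finset.card_univ, Fintype.card_fin, nsmul_eq_mul]
              ring
      have habs : |(-δ)| = δ := by rw [abs_neg, abs_of_pos hδpos]
      rw [hS2, habs]
      nlinarith
    · -- all components nonnegative : use lam = δ
      obtain ⟨n, m, hnm, hbd⟩ := density_core y.1 y.2 δ hδpos hpos
      refine ⟨n, m, δ, ne_of_gt hδpos, ?_⟩
      show dmix n m δ y.1 y.2 < ε
      unfold dmix
      have hS2 : ∑ j, |((m j:ℝ) - (n j:ℝ)) - (y.2 j:ℝ)| = 0 :=
        Finset.sum_eq_zero fun j _ => by rw [sub_sub, ← sub_sub, hnm j, abs_zero]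
      have hS1 : ∑ j, |δ * ((n j:ℝ) + (m j:ℝ)) - y.1 j|
          ≤ δ * (K:ℝ) + 2*δ*(d:ℝ) := by
        calc ∑ j, |δ * ((n j:ℝ) + (m j:ℝ)) - y.1 j|
            ≤ ∑ j, (δ * (((y.2 j).natAbs):ℝ) + 2*δ) :=
              Finset.sum_le_sum fun j _ => hbd j
          _ = δ * (K:ℝ) + 2*δ*(d:ℝ) := by
              rw [Finset.sum_add_distrib, ← Finset.mul_sum, ← hKsum, Finset.sum_const,
                Finset.card_univ, Fintype.card_fin, nsmul_eq_mul]
              ring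
      have habs : |δ| = δ := abs_of_pos hδpos
      rw [hS2, habs]
      nlinarith

end Stmt7Aux

/-- `(Ĥ^d, d̂)` is the completion of `(H̃^d, d̂)`: the extended `d̂` is a distance on `Ĥ^d`,
the space is complete, and `H̃^d` embeds isometrically as a dense subset. -/
theorem stmt7 (d : ℕ) :
    -- d̂ is a distance on Ĥ^d
    (∀ a b : Hhat d, dhat a b = 0 ↔ a = b) ∧
    (∀ a b : Hhat d, dhat a b = dhat b a) ∧
    (∀ a b c : Hhat d, dhat a c ≤ dhat a b + dhat b c) ∧
    -- H̃^d is isometrically embedded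
    (∀ (n m : Fin d → ℕ) (lam : ℝ) (h : lam ≠ 0) (n' m' : Fin d → ℕ) (lam' : ℝ)
        (h' : lam' ≠ 0),
      dhat (iotaT n m lam h) (iotaT n' m' lam' h') = dtilde n m lam n' m' lam') ∧
    -- (Ĥ^d, d̂) is complete
    (∀ u : ℕ → Hhat d,
      (∀ ε > (0 : ℝ), ∃ N, ∀ p ≥ N, ∀ q ≥ N, dhat (u p) (u q) < ε) →
      ∃ a : Hhat d, ∀ ε > (0 : ℝ), ∃ N, ∀ p ≥ N, dhat (u p) a < ε) ∧
    -- H̃^d is dense in Ĥ^d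
    (∀ a : Hhat d, ∀ ε > (0 : ℝ),
      ∃ (n m : Fin d → ℕ) (lam : ℝ) (h : lam ≠ 0), dhat a (iotaT n m lam h) < ε) := by

  refine ⟨?_, ?_, ?_, ?_, ?_, ?_⟩
  · intro a b
    constructor
    · intro h
      rw [Stmt7Aux.dhat_eq] at h
      exact Stmt7Aux.Phi_inj (Stmt7Aux.Dl1_eq_zero h)
    · rintro rfl
      rw [Stmt7Aux.dhat_eq]
      exact Stmt7Aux.Dl1_self _
  · intro a b
    rw [Stmt7Aux.dhat_eq, Stmt7Aux.dhat_eq]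
    exact Stmt7Aux.Dl1_comm _ _
  · intro a b c
    rw [Stmt7Aux.dhat_eq, Stmt7Aux.dhat_eq, Stmt7Aux.dhat_eq]
    exact Stmt7Aux.Dl1_triangle _ _ _
  · intro n m lam h n' m' lam' h'
    rfl
  · exact fun u hu => Stmt7Aux.complete_aux u hu
  · exact fun a ε hε => Stmt7Aux.dense_aux a ε hε

end
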